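/- Let F be a commutative unital ring such that Der(F) is a free F-module with finite basis {∂_i}, and let ρ be an F-module endomorphism of Der(F). For X, Y ∈ Der(F), writing Y = Σ_i Yⁱ·∂_i, define the additive endomorphism X•Y of F by X•Y = Σ_i Yⁱ·(X∘∂_i) + ρ(X)(Yⁱ)·∂_i, and set [X,Y]• = X•Y − Y•X. Then [X,Y]• is again a derivation of F: for all f, g ∈ F, [X,Y]•(f·g) = [X,Y]•(f)·g + f·[X,Y]•(g). -/

import Mathlib

/-- The operation `X • Y = Σ_i Yⁱ·(X∘∂_i) + ρ(X)(Yⁱ)·∂_i`, as an additive endomorphism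
of `F`, where `Yⁱ` are the coordinates of `Y` in the basis `{∂_i}` of `Der(F)`. -/
noncomputable def derBullet {F : Type*} [CommRing F] {ι : Type*} [Fintype ι]
    (b : Module.Basis ι F (Derivation ℤ F F))
    (ρ : Derivation ℤ F F →ₗ[F] Derivation ℤ F F)
    (X Y : Derivation ℤ F F) : F → F :=
  fun f => ∑ i, (b.repr Y i * X (b i f) + (ρ X) (b.repr Y i) * b i f)

/-- The bracket `[X,Y]• = X•Y − Y•X`, as an additive endomorphism of `F`. -/
noncomputable def derBulletBracket {F : Type*} [CommRing F] {ι : Type*} [Fintype ι]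
    (b : Module.Basis ι F (Derivation ℤ F F))
    (ρ : Derivation ℤ F F →ₗ[F] Derivation ℤ F F)
    (X Y : Derivation ℤ F F) : F → F :=
  fun f => derBullet b ρ X Y f - derBullet b ρ Y X f

lemma sum_repr_apply {F : Type*} [CommRing F] {ι : Type*} [Fintype ι]
    (b : Module.Basis ι F (Derivation ℤ F F)) (Y : Derivation ℤ F F) (h : F) :
    ∑ i, b.repr Y i * b i h = Y h := by
  let ev : Derivation ℤ F F →+ F :=
    { toFun := fun D => D h, map_zero' := rfl, map_add' := fun _ _ => rfl }
  have h1 := map_sum ev (fun i => b.repr Y i • b i) Finset.univ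
  have h2 := congrArg ev (b.sum_repr Y)
  rw [h1] at h2
  simpa [ev] using h2

lemma derBullet_mul {F : Type*} [CommRing F] {ι : Type*} [Fintype ι]
    (b : Module.Basis ι F (Derivation ℤ F F))
    (ρ : Derivation ℤ F F →ₗ[F] Derivation ℤ F F)
    (X Y : Derivation ℤ F F) (f g : F) :
    derBullet b ρ X Y (f * g)
      = derBullet b ρ X Y f * g + f * derBullet b ρ X Y g
        + Y f * X g + X f * Y g := by
  have h1 := sum_repr_apply b Y f
  have h2 := sum_repr_apply b Y g
  simp only [derBullet, Derivation.leibniz, smul_eq_mul, map_add, Finset.sum_add_distrib,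
    ← Finset.sum_add_distrib]
  rw [← h1, ← h2, Finset.mul_sum, Finset.mul_sum, Finset.sum_mul, Finset.sum_mul,
    ← Finset.sum_add_distrib, ← Finset.sum_add_distrib, ← Finset.sum_add_distrib]
  apply Finset.sum_congr rfl
  intro i _
  ring

/-- If `Der(F)` is a free `F`-module with finite basis `{∂_i}` and `ρ`
is an `F`-module endomorphism of `Der(F)`, then the bracket `[X,Y]• = X•Y − Y•X` is
again a derivation of `F`, i.e. it satisfies the Leibniz rule. -/
theorem derBulletBracket_leibniz
    {F : Type*} [CommRing F] {ι : Type*} [Fintype ι]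
    (b : Module.Basis ι F (Derivation ℤ F F))
    (ρ : Derivation ℤ F F →ₗ[F] Derivation ℤ F F)
    (X Y : Derivation ℤ F F) (f g : F) :
    derBulletBracket b ρ X Y (f * g)
      = derBulletBracket b ρ X Y f * g + f * derBulletBracket b ρ X Y g := by
  simp only [derBulletBracket, derBullet_mul]
  ring
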